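/- Under the setting of the error-accumulation lemma, and additionally with δ_∞ = ‖(Û^T O)^T b̂_∞ − 1_m‖_∞, the total variation error of the estimated joint distribution satisfies, for any t ≥ 1: Σ_{x_{1:t}} |Pr[x_{1:t}] − b̂_∞^T B̂_{x_t}⋯B̂_{x_1} b̂_1| ≤ δ_∞ + (1 + δ_∞)((1+Δ)^t δ_1 + (1+Δ)^t − 1). -/

import Mathlib

open Matrix

/-- Vector 1-norm. -/
def l1norm {m : ℕ} (v : Fin m → ℝ) : ℝ := ∑ i, |v i|

/-- Vector ∞-norm. -/
noncomputable def linfnorm {m : ℕ} (v : Fin m → ℝ) : ℝ := ⨆ i : Fin m, |v i|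

/-- Operator norm induced by the vector 1-norm (max column sum). -/
noncomputable def opL1 {m : ℕ} (M : Matrix (Fin m) (Fin m) ℝ) : ℝ :=
  ⨆ j : Fin m, ∑ i, |M i j|

lemma l1norm_nonneg {m : ℕ} (v : Fin m → ℝ) : 0 ≤ l1norm v :=
  Finset.sum_nonneg fun _ _ => abs_nonneg _

lemma abs_le_linfnorm {m : ℕ} (v : Fin m → ℝ) (i : Fin m) : |v i| ≤ linfnorm v := by
  unfold linfnorm
  exact le_ciSup (Set.Finite.bddAbove (Set.finite_range fun i => |v i|)) i

lemma linfnorm_nonneg {m : ℕ} (hm : 0 < m) (v : Fin m → ℝ) : 0 ≤ linfnorm v :=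
  le_trans (abs_nonneg _) (abs_le_linfnorm v ⟨0, hm⟩)

lemma colsum_le_opL1 {m : ℕ} (M : Matrix (Fin m) (Fin m) ℝ) (j : Fin m) :
    ∑ i, |M i j| ≤ opL1 M := by
  unfold opL1
  exact le_ciSup (Set.Finite.bddAbove (Set.finite_range fun j => ∑ i, |M i j|)) j

lemma opL1_nonneg {m : ℕ} (hm : 0 < m) (M : Matrix (Fin m) (Fin m) ℝ) : 0 ≤ opL1 M :=
  le_trans (Finset.sum_nonneg fun _ _ => abs_nonneg _) (colsum_le_opL1 M ⟨0, hm⟩)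

lemma l1norm_mulVec_le {m : ℕ} (M : Matrix (Fin m) (Fin m) ℝ) (v : Fin m → ℝ) :
    l1norm (M.mulVec v) ≤ opL1 M * l1norm v := by
  unfold l1norm
  calc ∑ i, |M.mulVec v i| ≤ ∑ i, ∑ j, |M i j| * |v j| := by
        refine Finset.sum_le_sum fun i _ => ?_
        simp only [Matrix.mulVec, dotProduct]
        exact le_trans (Finset.abs_sum_le_sum_abs _ _)
          (le_of_eq (Finset.sum_congr rfl fun j _ => abs_mul _ _))
    _ = ∑ j, (∑ i, |M i j|) * |v j| := by
        rw [Finset.sum_comm]; simp [Finset.sum_mul]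
    _ ≤ ∑ j, opL1 M * |v j| := by
        refine Finset.sum_le_sum fun j _ => ?_
        exact mul_le_mul_of_nonneg_right (colsum_le_opL1 M j) (abs_nonneg _)
    _ = opL1 M * ∑ j, |v j| := by rw [Finset.mul_sum]

lemma l1norm_add_le {m : ℕ} (u v : Fin m → ℝ) : l1norm (u + v) ≤ l1norm u + l1norm v := by
  unfold l1norm
  rw [← Finset.sum_add_distrib]
  exact Finset.sum_le_sum fun i _ => abs_add_le _ _

lemma abs_dot_le {m : ℕ} (u v : Fin m → ℝ) :
    |dotProduct u v| ≤ linfnorm u * l1norm v := by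
  unfold dotProduct l1norm
  calc |∑ i, u i * v i| ≤ ∑ i, |u i| * |v i| := by
        exact le_trans (Finset.abs_sum_le_sum_abs _ _)
          (le_of_eq (Finset.sum_congr rfl fun i _ => abs_mul _ _))
    _ ≤ ∑ i, linfnorm u * |v i| :=
        Finset.sum_le_sum fun i _ =>
          mul_le_mul_of_nonneg_right (abs_le_linfnorm u i) (abs_nonneg _)
    _ = linfnorm u * ∑ i, |v i| := by rw [Finset.mul_sum]

lemma sum_fn_succ {n t : ℕ} (G : (Fin (t+1) → Fin n) → ℝ) :
    ∑ xs : Fin (t+1) → Fin n, G xs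
      = ∑ y : Fin n, ∑ g : Fin t → Fin n, G (Fin.cons y g) := by
  calc ∑ xs : Fin (t+1) → Fin n, G xs
      = ∑ p : Fin n × (Fin t → Fin n), G (Fin.cons p.1 p.2) :=
        (Fintype.sum_equiv (Fin.consEquiv fun _ => Fin n)
          (fun p => G (Fin.cons p.1 p.2)) G (fun p => rfl)).symm
    _ = ∑ y : Fin n, ∑ g : Fin t → Fin n, G (Fin.cons y g) :=
        Fintype.sum_prod_type _

lemma ofFn_cons {n t : ℕ} (y : Fin n) (g : Fin t → Fin n) :
    List.ofFn (Fin.cons y g : Fin (t+1) → Fin n) = y :: List.ofFn g := by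
  rw [List.ofFn_succ]; simp

lemma key_nonneg {m n : ℕ} (A : Fin n → Matrix (Fin m) (Fin m) ℝ)
    (hAnn : ∀ y i j, 0 ≤ A y i j) :
    ∀ (t : ℕ) (p : Fin m → ℝ), (∀ i, 0 ≤ p i) →
      ∀ xs : Fin t → Fin n, ∀ i,
        0 ≤ (List.ofFn xs).foldl (fun v y => (A y).mulVec v) p i := by
  intro t
  induction t with
  | zero => intro p hp xs i; simpa using hp i
  | succ t ih =>
    intro p hp xs i
    have hxs : xs = Fin.cons (xs 0) (fun j => xs j.succ) := by
      funext j; cases j using Fin.cases <;> simp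
    rw [hxs, ofFn_cons, List.foldl_cons]
    refine ih _ (fun k => ?_) _ i
    simp only [Matrix.mulVec, dotProduct]
    exact Finset.sum_nonneg fun j _ => mul_nonneg (hAnn _ _ _) (hp j)

lemma massA {m n : ℕ} (A : Fin n → Matrix (Fin m) (Fin m) ℝ)
    (hAsum : ∀ j, (∑ y, ∑ i, A y i j) = 1) (p : Fin m → ℝ) :
    ∑ y, ∑ i, ((A y).mulVec p) i = ∑ j, p j := by
  have step : ∀ y : Fin n, ∑ i, ((A y).mulVec p) i = ∑ j, (∑ i, A y i j) * p j := by
    intro y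
    simp only [Matrix.mulVec, dotProduct]
    rw [Finset.sum_comm]
    exact Finset.sum_congr rfl fun j _ => (Finset.sum_mul _ _ _).symm
  calc ∑ y, ∑ i, ((A y).mulVec p) i = ∑ y, ∑ j, (∑ i, A y i j) * p j :=
        Finset.sum_congr rfl fun y _ => step y
    _ = ∑ j, ∑ y, (∑ i, A y i j) * p j := Finset.sum_comm
    _ = ∑ j, (∑ y, ∑ i, A y i j) * p j :=
        Finset.sum_congr rfl fun j _ => (Finset.sum_mul _ _ _).symm
    _ = ∑ j, p j := by
        refine Finset.sum_congr rfl fun j _ => ?_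
        rw [hAsum j, one_mul]

lemma key_mass {m n : ℕ} (A : Fin n → Matrix (Fin m) (Fin m) ℝ)
    (hAsum : ∀ j, (∑ y, ∑ i, A y i j) = 1) :
    ∀ (t : ℕ) (p : Fin m → ℝ),
      ∑ xs : Fin t → Fin n, ∑ i, (List.ofFn xs).foldl (fun v y => (A y).mulVec v) p i
        = ∑ i, p i := by
  intro t
  induction t with
  | zero => intro p; simp
  | succ t ih =>
    intro p
    rw [sum_fn_succ (fun xs => ∑ i, (List.ofFn xs).foldl (fun v y => (A y).mulVec v) p i)]
    calc ∑ y, ∑ g : Fin t → Fin n, ∑ i,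
          (List.ofFn (Fin.cons y g)).foldl (fun v y => (A y).mulVec v) p i
        = ∑ y, ∑ i, ((A y).mulVec p) i := by
          refine Finset.sum_congr rfl fun y _ => ?_
          simp only [ofFn_cons, List.foldl_cons]
          exact ih ((A y).mulVec p)
      _ = ∑ i, p i := massA A hAsum p

lemma key_err {m n : ℕ} (hm : 0 < m) (A Bhat : Fin n → Matrix (Fin m) (Fin m) ℝ)
    (hAnn : ∀ y i j, 0 ≤ A y i j)
    (hAsum : ∀ j, (∑ y, ∑ i, A y i j) = 1)
    (S : Matrix (Fin m) (Fin m) ℝ) (hS : S * S⁻¹ = 1)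
    (Δx : Fin n → ℝ) (hΔx : ∀ y, Δx y = opL1 (S⁻¹ * Bhat y * S - A y))
    (Δ : ℝ) (hΔ : Δ = ∑ y, Δx y) :
    ∀ (t : ℕ) (p b : Fin m → ℝ), (∀ i, 0 ≤ p i) →
      ∑ xs : Fin t → Fin n,
          l1norm (S⁻¹.mulVec ((List.ofFn xs).foldl (fun v y => (Bhat y).mulVec v) b)
            - (List.ofFn xs).foldl (fun v y => (A y).mulVec v) p)
        ≤ (1+Δ)^t * ((∑ i, p i) + l1norm (S⁻¹.mulVec b - p)) - (∑ i, p i) := by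
  have hΔ0 : 0 ≤ Δ := by
    rw [hΔ]
    exact Finset.sum_nonneg fun y _ => by rw [hΔx]; exact opL1_nonneg hm _
  intro t
  induction t with
  | zero => intro p b hp; simp
  | succ t ih =>
    intro p b hp
    have hpow : (0:ℝ) ≤ (1+Δ)^t := pow_nonneg (by linarith) t
    have hq' : ∀ y, S⁻¹.mulVec ((Bhat y).mulVec b)
        = (S⁻¹ * Bhat y * S - A y).mulVec (S⁻¹.mulVec b) + (A y).mulVec (S⁻¹.mulVec b) := by
      intro y
      rw [← Matrix.add_mulVec, sub_add_cancel, Matrix.mulVec_mulVec, Matrix.mulVec_mulVec,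
          Matrix.mul_assoc (S⁻¹ * Bhat y) S S⁻¹, hS, Matrix.mul_one]
    have hkey : ∀ y, S⁻¹.mulVec ((Bhat y).mulVec b) - (A y).mulVec p
        = (S⁻¹ * Bhat y * S - A y).mulVec (S⁻¹.mulVec b)
          + (A y).mulVec (S⁻¹.mulVec b - p) := by
      intro y
      rw [hq' y, Matrix.mulVec_sub]
      abel
    have hpl : l1norm p = ∑ i, p i :=
      Finset.sum_congr rfl fun i _ => abs_of_nonneg (hp i)
    have hqle : l1norm (S⁻¹.mulVec b) ≤ (∑ i, p i) + l1norm (S⁻¹.mulVec b - p) := by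
      have h0 : S⁻¹.mulVec b = p + (S⁻¹.mulVec b - p) := by abel
      calc l1norm (S⁻¹.mulVec b) = l1norm (p + (S⁻¹.mulVec b - p)) := by rw [← h0]
        _ ≤ l1norm p + l1norm (S⁻¹.mulVec b - p) := l1norm_add_le _ _
        _ = (∑ i, p i) + l1norm (S⁻¹.mulVec b - p) := by rw [hpl]
    have hdy : ∀ y, l1norm (S⁻¹.mulVec ((Bhat y).mulVec b) - (A y).mulVec p)
        ≤ Δx y * ((∑ i, p i) + l1norm (S⁻¹.mulVec b - p))
          + l1norm ((A y).mulVec (S⁻¹.mulVec b - p)) := by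
      intro y
      rw [hkey y]
      refine le_trans (l1norm_add_le _ _) ?_
      have h1 := l1norm_mulVec_le (S⁻¹ * Bhat y * S - A y) (S⁻¹.mulVec b)
      have h2 : opL1 (S⁻¹ * Bhat y * S - A y) * l1norm (S⁻¹.mulVec b)
          ≤ Δx y * ((∑ i, p i) + l1norm (S⁻¹.mulVec b - p)) := by
        rw [hΔx y]
        exact mul_le_mul_of_nonneg_left hqle (opL1_nonneg hm _)
      linarith
    have hsum_Aε : ∑ y, l1norm ((A y).mulVec (S⁻¹.mulVec b - p))
        ≤ l1norm (S⁻¹.mulVec b - p) := by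
      set ε := S⁻¹.mulVec b - p with hε
      have h1 : ∀ y, l1norm ((A y).mulVec ε) ≤ ∑ j, (∑ i, A y i j) * |ε j| := by
        intro y
        unfold l1norm
        calc ∑ i, |(A y).mulVec ε i| ≤ ∑ i, ∑ j, A y i j * |ε j| := by
              refine Finset.sum_le_sum fun i _ => ?_
              simp only [Matrix.mulVec, dotProduct]
              refine le_trans (Finset.abs_sum_le_sum_abs _ _)
                (Finset.sum_le_sum fun j _ => ?_)
              rw [abs_mul, abs_of_nonneg (hAnn y i j)]
          _ = ∑ j, (∑ i, A y i j) * |ε j| := by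
              rw [Finset.sum_comm]
              exact Finset.sum_congr rfl fun j _ => (Finset.sum_mul _ _ _).symm
      calc ∑ y, l1norm ((A y).mulVec ε) ≤ ∑ y, ∑ j, (∑ i, A y i j) * |ε j| :=
            Finset.sum_le_sum fun y _ => h1 y
        _ = ∑ j, (∑ y, (∑ i, A y i j)) * |ε j| := by
            rw [Finset.sum_comm]
            exact Finset.sum_congr rfl fun j _ => (Finset.sum_mul _ _ _).symm
        _ = l1norm ε := by
            unfold l1norm
            refine Finset.sum_congr rfl fun j _ => ?_
            rw [hAsum j, one_mul]
    rw [sum_fn_succ (fun xs => l1norm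
      (S⁻¹.mulVec ((List.ofFn xs).foldl (fun v y => (Bhat y).mulVec v) b)
        - (List.ofFn xs).foldl (fun v y => (A y).mulVec v) p))]
    have hAp : ∀ y, ∀ i, 0 ≤ ((A y).mulVec p) i := by
      intro y i
      simp only [Matrix.mulVec, dotProduct]
      exact Finset.sum_nonneg fun j _ => mul_nonneg (hAnn _ _ _) (hp j)
    calc ∑ y, ∑ g : Fin t → Fin n, l1norm
          (S⁻¹.mulVec ((List.ofFn (Fin.cons y g)).foldl (fun v y => (Bhat y).mulVec v) b)
            - (List.ofFn (Fin.cons y g)).foldl (fun v y => (A y).mulVec v) p)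
        ≤ ∑ y, ((1+Δ)^t * ((∑ i, ((A y).mulVec p) i)
            + l1norm (S⁻¹.mulVec ((Bhat y).mulVec b) - (A y).mulVec p))
            - ∑ i, ((A y).mulVec p) i) := by
          refine Finset.sum_le_sum fun y _ => ?_
          simp only [ofFn_cons, List.foldl_cons]
          exact ih ((A y).mulVec p) ((Bhat y).mulVec b) (hAp y)
      _ ≤ (1+Δ)^(t+1) * ((∑ i, p i) + l1norm (S⁻¹.mulVec b - p)) - (∑ i, p i) := by
          rw [Finset.sum_sub_distrib, massA A hAsum p, ← Finset.mul_sum,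
              Finset.sum_add_distrib, massA A hAsum p]
          have hsd : ∑ y, l1norm (S⁻¹.mulVec ((Bhat y).mulVec b) - (A y).mulVec p)
              ≤ Δ * ((∑ j, p j) + l1norm (S⁻¹.mulVec b - p)) + l1norm (S⁻¹.mulVec b - p) := by
            calc ∑ y, l1norm (S⁻¹.mulVec ((Bhat y).mulVec b) - (A y).mulVec p)
                ≤ ∑ y, (Δx y * ((∑ i, p i) + l1norm (S⁻¹.mulVec b - p))
                    + l1norm ((A y).mulVec (S⁻¹.mulVec b - p))) :=
                  Finset.sum_le_sum fun y _ => hdy y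
              _ = (∑ y, Δx y) * ((∑ i, p i) + l1norm (S⁻¹.mulVec b - p))
                    + ∑ y, l1norm ((A y).mulVec (S⁻¹.mulVec b - p)) := by
                  rw [Finset.sum_add_distrib, Finset.sum_mul]
              _ ≤ Δ * ((∑ j, p j) + l1norm (S⁻¹.mulVec b - p)) + l1norm (S⁻¹.mulVec b - p) := by
                  rw [hΔ]
                  exact add_le_add le_rfl hsum_Aε
          have h2 : (1+Δ)^t * ((∑ j, p j)
                + ∑ y, l1norm (S⁻¹.mulVec ((Bhat y).mulVec b) - (A y).mulVec p))
              ≤ (1+Δ)^t * ((∑ j, p j)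
                + (Δ * ((∑ j, p j) + l1norm (S⁻¹.mulVec b - p)) + l1norm (S⁻¹.mulVec b - p))) :=
            mul_le_mul_of_nonneg_left (by linarith) hpow
          have h3 : (1+Δ)^t * ((∑ j, p j)
                + (Δ * ((∑ j, p j) + l1norm (S⁻¹.mulVec b - p)) + l1norm (S⁻¹.mulVec b - p)))
              = (1+Δ)^(t+1) * ((∑ j, p j) + l1norm (S⁻¹.mulVec b - p)) := by ring
          linarith

/-- total variation bound for joint probabilities: with the setting of the
error-accumulation lemma and `δ_∞ = ‖(Ûᵀ O)ᵀ b̂_∞ − 1ₘ‖_∞`, for any `t ≥ 1`: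
`Σ_{x_{1:t}} |Pr[x_{1:t}] − b̂_∞ᵀ B̂_{x_t}⋯B̂_{x_1} b̂₁|
  ≤ δ_∞ + (1 + δ_∞)((1+Δ)^t δ₁ + (1+Δ)^t − 1)`,
where `Pr[x_{1:t}] = 1ₘᵀ A_{x_t}⋯A_{x_1} π`. -/
theorem hmm_joint_l1_bound (m n t : ℕ) (hm : 0 < m) (ht : 1 ≤ t)
    (T : Matrix (Fin m) (Fin m) ℝ) (O : Matrix (Fin n) (Fin m) ℝ) (π : Fin m → ℝ)
    (hTnn : ∀ i j, 0 ≤ T i j) (hTcol : ∀ j, ∑ i, T i j = 1)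
    (hOnn : ∀ x j, 0 ≤ O x j) (hOcol : ∀ j, ∑ x, O x j = 1)
    (hπnn : ∀ i, 0 ≤ π i) (hπsum : ∑ i, π i = 1)
    (A : Fin n → Matrix (Fin m) (Fin m) ℝ)
    (hA : ∀ y, A y = T * Matrix.diagonal (fun i => O y i))
    (Uhat : Matrix (Fin n) (Fin m) ℝ) (hU : IsUnit (Uhatᵀ * O))
    (Bhat : Fin n → Matrix (Fin m) (Fin m) ℝ) (b1hat binfhat : Fin m → ℝ)
    (Δx : Fin n → ℝ)
    (hΔx : ∀ y, Δx y = opL1 ((Uhatᵀ * O)⁻¹ * Bhat y * (Uhatᵀ * O) - A y))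
    (Δ : ℝ) (hΔ : Δ = ∑ y, Δx y)
    (δ₁ : ℝ) (hδ₁ : δ₁ = l1norm (((Uhatᵀ * O)⁻¹).mulVec b1hat - π))
    (δinf : ℝ) (hδinf : δinf = linfnorm ((Uhatᵀ * O)ᵀ.mulVec binfhat - fun _ => (1 : ℝ))) :
    ∑ xs : Fin t → Fin n,
        |dotProduct (fun _ => (1 : ℝ))
            ((List.ofFn xs).foldl (fun v y => (A y).mulVec v) π)
          - dotProduct binfhat
            ((List.ofFn xs).foldl (fun v y => (Bhat y).mulVec v) b1hat)|
      ≤ δinf + (1 + δinf) * ((1 + Δ) ^ t * δ₁ + (1 + Δ) ^ t - 1) := by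
  set S := Uhatᵀ * O with hSdef
  have hSinv : S * S⁻¹ = 1 :=
    Matrix.mul_nonsing_inv _ ((Matrix.isUnit_iff_isUnit_det _).mp hU)
  have hAnn : ∀ y i j, 0 ≤ A y i j := by
    intro y i j
    rw [hA, Matrix.mul_diagonal]
    exact mul_nonneg (hTnn i j) (hOnn y j)
  have hAsum : ∀ j, (∑ y, ∑ i, A y i j) = 1 := by
    intro j
    have h1 : ∀ (y : Fin n) (i : Fin m), A y i j = T i j * O y j := fun y i => by
      rw [hA, Matrix.mul_diagonal]
    calc ∑ y, ∑ i, A y i j = ∑ y, ∑ i, T i j * O y j := by simp_rw [h1]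
      _ = ∑ y, (∑ i, T i j) * O y j := by
          refine Finset.sum_congr rfl fun y _ => (Finset.sum_mul _ _ _).symm
      _ = 1 := by simp_rw [hTcol j, one_mul]; exact hOcol j
  have hnn := key_nonneg A hAnn t π hπnn
  have hmass := key_mass A hAsum t π
  have herr := key_err hm A Bhat hAnn hAsum S hSinv Δx hΔx Δ hΔ t π b1hat hπnn
  rw [hπsum, ← hδ₁] at herr
  have hδ0 : 0 ≤ δinf := by rw [hδinf]; exact linfnorm_nonneg hm _
  -- pointwise bound
  have hpt : ∀ (v w : Fin m → ℝ), (∀ i, 0 ≤ v i) →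
      |dotProduct (fun _ => (1:ℝ)) v - dotProduct binfhat w|
        ≤ δinf * (∑ i, v i) + (1 + δinf) * l1norm (S⁻¹.mulVec w - v) := by
    intro v w hv
    set g := Sᵀ.mulVec binfhat - (fun _ => (1:ℝ)) with hg
    set ε := S⁻¹.mulVec w - v with hε
    have hw : w = S.mulVec (S⁻¹.mulVec w) := by
      rw [Matrix.mulVec_mulVec, hSinv, Matrix.one_mulVec]
    have hdot : dotProduct binfhat w
        = dotProduct (Sᵀ.mulVec binfhat) (v + ε) := by
      conv_lhs => rw [hw]
      rw [Matrix.dotProduct_mulVec, ← Matrix.mulVec_transpose]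
      congr 1
      rw [hε]; abel
    have hdiff : dotProduct (fun _ => (1:ℝ)) v - dotProduct binfhat w
        = -(dotProduct g v) - dotProduct g ε
          - dotProduct (fun _ => (1:ℝ)) ε := by
      rw [hdot, hg]
      simp only [sub_dotProduct, dotProduct_add]
      ring
    rw [hdiff]
    have habs : |-(dotProduct g v) - dotProduct g ε
          - dotProduct (fun _ => (1:ℝ)) ε|
        ≤ |dotProduct g v| + |dotProduct g ε|
          + |dotProduct (fun _ => (1:ℝ)) ε| := by
      have h0 : -(dotProduct g v) - dotProduct g ε
          - dotProduct (fun _ => (1:ℝ)) ε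
          = -(dotProduct g v + dotProduct g ε
            + dotProduct (fun _ => (1:ℝ)) ε) := by ring
      rw [h0, abs_neg]
      exact abs_add_three _ _ _
    have e1 := abs_dot_le g v
    have e2 := abs_dot_le g ε
    have e3 : |dotProduct (fun _ => (1:ℝ)) ε| ≤ l1norm ε := by
      unfold dotProduct l1norm
      simp only [one_mul]
      exact Finset.abs_sum_le_sum_abs ε Finset.univ
    have hl1v : l1norm v = ∑ i, v i :=
      Finset.sum_congr rfl fun i _ => abs_of_nonneg (hv i)
    rw [← hδinf] at e1 e2
    rw [hl1v] at e1
    have hl1ε : 0 ≤ l1norm ε := l1norm_nonneg ε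
    calc _ ≤ |dotProduct g v| + |dotProduct g ε|
          + |dotProduct (fun _ => (1:ℝ)) ε| := habs
      _ ≤ δinf * (∑ i, v i) + (1 + δinf) * l1norm ε := by linarith
  calc ∑ xs : Fin t → Fin n,
        |dotProduct (fun _ => (1 : ℝ))
            ((List.ofFn xs).foldl (fun v y => (A y).mulVec v) π)
          - dotProduct binfhat
            ((List.ofFn xs).foldl (fun v y => (Bhat y).mulVec v) b1hat)|
      ≤ ∑ xs : Fin t → Fin n,
          (δinf * (∑ i, (List.ofFn xs).foldl (fun v y => (A y).mulVec v) π i)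
            + (1 + δinf) * l1norm
              (S⁻¹.mulVec ((List.ofFn xs).foldl (fun v y => (Bhat y).mulVec v) b1hat)
                - (List.ofFn xs).foldl (fun v y => (A y).mulVec v) π)) :=
        Finset.sum_le_sum fun xs _ => hpt _ _ (hnn xs)
    _ = δinf * (∑ xs : Fin t → Fin n,
            ∑ i, (List.ofFn xs).foldl (fun v y => (A y).mulVec v) π i)
          + (1 + δinf) * ∑ xs : Fin t → Fin n, l1norm
              (S⁻¹.mulVec ((List.ofFn xs).foldl (fun v y => (Bhat y).mulVec v) b1hat)
                - (List.ofFn xs).foldl (fun v y => (A y).mulVec v) π) := by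
        rw [Finset.sum_add_distrib, ← Finset.mul_sum, ← Finset.mul_sum]
    _ ≤ δinf * 1 + (1 + δinf) * ((1 + Δ) ^ t * (1 + δ₁) - 1) := by
        rw [hmass, hπsum]
        exact add_le_add le_rfl (mul_le_mul_of_nonneg_left herr (by linarith))
    _ = δinf + (1 + δinf) * ((1 + Δ) ^ t * δ₁ + (1 + Δ) ^ t - 1) := by ring
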